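/- Let u ⊆ {1,…,s} be nonempty and k ∈ {0,1,…,m−1}^{|u|}. Then the gain coefficient satisfies Γ_{u,k} = Σ_{i=0}^{2^m−1} 1{C_{u,k}·i⃗ = 0} · ∏_{j∈u} N_{0,i,j}. -/

import Mathlib

open Finset

noncomputable section

/-- The bit vector `i⃗ ∈ F₂^m` of the integer `i = Σ_{ℓ=1}^m i_ℓ 2^{ℓ-1}`. -/
def bvec (m : ℕ) (i : ℕ) : Fin m → ZMod 2 :=
  fun ℓ => if Nat.testBit i ℓ.1 then 1 else 0

/-- The `(r+1)`-st row (i.e. `r` with 0-indexing) of an `m × m` matrix over `F₂`,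
as a vector in `F₂^m`; junk value `0` if `r ≥ m` (never used under the hypotheses below). -/
def rowAt (m : ℕ) (A : Matrix (Fin m) (Fin m) (ZMod 2)) (r : ℕ) : Fin m → ZMod 2 :=
  fun ℓ => if h : r < m then A ⟨r, h⟩ ℓ else 0

/-- The stacked matrix `C_{u,k}`: for each `j ∈ u`, the first `k j` rows of `C j`. -/
def stack {m s : ℕ} (C : Fin s → Matrix (Fin m) (Fin m) (ZMod 2))
    (u : Finset (Fin s)) (k : Fin s → ℕ) :
    Matrix ((j : {x // x ∈ u}) × Fin (k j.1)) (Fin m) (ZMod 2) :=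
  fun p => rowAt m (C p.1.1) p.2.1

/-- `∇C_{u,k}`: the matrix whose rows are the `(k j + 1)`-st rows (1-indexed) of `C j`, `j ∈ u`. -/
def grad {m s : ℕ} (C : Fin s → Matrix (Fin m) (Fin m) (ZMod 2))
    (u : Finset (Fin s)) (k : Fin s → ℕ) :
    Matrix {x // x ∈ u} (Fin m) (ZMod 2) :=
  fun j => rowAt m (C j.1) (k j.1)

/-- The coordinate `x_{ij} ∈ [0,1)` of the digital net generated by `C₁,…,C_s`:
`x_{ij} = Σ_{ℓ=1}^m y_ℓ 2^{-ℓ}` where `y = C_j · i⃗` over `F₂`. -/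
def pt {m s : ℕ} (C : Fin s → Matrix (Fin m) (Fin m) (ZMod 2)) (i : ℕ) (j : Fin s) : ℝ :=
  ∑ ℓ : Fin m, (((C j).mulVec (bvec m i) ℓ).val : ℝ) / 2 ^ (ℓ.1 + 1)

/-- The factor `N`: with `M(x,x') = max{k ∈ ℕ₀ : ⌊2^k x⌋ = ⌊2^k x'⌋}` (the number of matching
leading binary digits), `Nf x x' c` equals `1` if `M(x,x') > c` (equivalently the first `c+1`
binary digits match), `-1` if `M(x,x') = c` (the first `c` digits match but not `c+1`), and
`0` if `M(x,x') < c`. -/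
def Nf (x x' : ℝ) (c : ℕ) : ℤ :=
  if ⌊(2:ℝ) ^ (c + 1) * x⌋ = ⌊(2:ℝ) ^ (c + 1) * x'⌋ then 1
  else if ⌊(2:ℝ) ^ c * x⌋ = ⌊(2:ℝ) ^ c * x'⌋ then -1
  else 0

/-- The gain coefficient `Γ_{u,k} = 2^{-m} Σ_{i=0}^{2^m-1} Σ_{i'=0}^{2^m-1} ∏_{j∈u} N_{i,i',j}`. -/
def Gam {m s : ℕ} (C : Fin s → Matrix (Fin m) (Fin m) (ZMod 2))
    (u : Finset (Fin s)) (k : Fin s → ℕ) : ℚ :=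
  (2 ^ m : ℚ)⁻¹ * ∑ i ∈ Finset.range (2 ^ m), ∑ i' ∈ Finset.range (2 ^ m),
      ∏ j ∈ u, (Nf (pt C i j) (pt C i' j) (k j) : ℚ)

/- ==================== auxiliary lemmas ==================== -/

lemma zmod2_val_le (a : ZMod 2) : a.val ≤ 1 := Nat.lt_succ_iff.mp a.val_lt

/-- the value in `[0,1)` whose binary digits are the entries of `v`. -/
def fval (m : ℕ) (v : Fin m → ZMod 2) : ℝ :=
  ∑ ℓ : Fin m, ((v ℓ).val : ℝ) / 2 ^ (ℓ.1 + 1)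

lemma pt_eq_fval {m s : ℕ} (C : Fin s → Matrix (Fin m) (Fin m) (ZMod 2)) (i : ℕ) (j : Fin s) :
    pt C i j = fval m ((C j).mulVec (bvec m i)) := rfl

lemma bvec_zero (m : ℕ) : bvec m 0 = 0 := by
  funext ℓ; simp [bvec]

lemma bvec_xor (m : ℕ) (i i' : ℕ) : bvec m (i ^^^ i') = bvec m i + bvec m i' := by
  funext ℓ
  simp only [bvec, Nat.testBit_xor, Pi.add_apply]
  rcases h1 : Nat.testBit i ℓ.1 <;> rcases h2 : Nat.testBit i' ℓ.1 <;> simp <;> decide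

lemma binsum_lt (c : ℕ) (b : ℕ → ℕ) (hb : ∀ t, b t ≤ 1) :
    ∑ t ∈ Finset.range c, b t * 2 ^ t < 2 ^ c := by
  induction c with
  | zero => simp
  | succ n ih =>
    rw [Finset.sum_range_succ]
    have h1 : b n * 2 ^ n ≤ 2 ^ n := by
      calc b n * 2 ^ n ≤ 1 * 2 ^ n := Nat.mul_le_mul_right _ (hb n)
      _ = 2 ^ n := one_mul _
    have h2 : 2 ^ (n + 1) = 2 ^ n + 2 ^ n := by ring
    omega

lemma binsum_inj (c : ℕ) (b d : ℕ → ℕ) (hb : ∀ t, b t ≤ 1) (hd : ∀ t, d t ≤ 1)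
    (h : ∑ t ∈ Finset.range c, b t * 2 ^ t = ∑ t ∈ Finset.range c, d t * 2 ^ t) :
    ∀ t < c, b t = d t := by
  induction c with
  | zero => omega
  | succ n ih =>
    rw [Finset.sum_range_succ, Finset.sum_range_succ] at h
    have hA := binsum_lt n b hb
    have hB := binsum_lt n d hd
    have hbn := hb n
    have hdn := hd n
    have hpos : 0 < 2 ^ n := by positivity
    have hend : b n = d n := by
      interval_cases hbn' : b n <;> interval_cases hdn' : d n <;> omega
    have hsum : ∑ t ∈ Finset.range n, b t * 2 ^ t = ∑ t ∈ Finset.range n, d t * 2 ^ t := by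
      rw [hend] at h; omega
    intro t ht
    rcases Nat.lt_succ_iff_lt_or_eq.mp ht with h' | h'
    · exact ih hsum t h'
    · rw [h']; exact hend

lemma geomsum (n : ℕ) : ∑ t ∈ Finset.range n, (1:ℝ)/2^(t+1) = 1 - 1/2^n := by
  induction n with
  | zero => simp
  | succ p ih =>
    rw [Finset.sum_range_succ, ih, pow_succ]
    have : (2:ℝ)^p ≠ 0 := by positivity
    field_simp
    ring

lemma floor_fval {m : ℕ} (c : ℕ) (hc : c ≤ m) (v : Fin m → ZMod 2) :
    ⌊(2:ℝ)^c * fval m v⌋ =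
      ((∑ ℓ ∈ Finset.univ.filter (fun ℓ : Fin m => ℓ.1 < c),
        (v ℓ).val * 2 ^ (c - 1 - ℓ.1) : ℕ) : ℤ) := by
  set N : ℕ := ∑ ℓ ∈ Finset.univ.filter (fun ℓ : Fin m => ℓ.1 < c),
        (v ℓ).val * 2 ^ (c - 1 - ℓ.1) with hN
  set R : ℝ := ∑ ℓ ∈ Finset.univ.filter (fun ℓ : Fin m => ¬ ℓ.1 < c),
        ((v ℓ).val : ℝ) / 2 ^ (ℓ.1 + 1 - c) with hR
  have hsplit : (2:ℝ)^c * fval m v = (N : ℝ) + R := by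
    rw [fval, Finset.mul_sum,
      ← Finset.sum_filter_add_sum_filter_not Finset.univ (fun ℓ : Fin m => ℓ.1 < c)]
    congr 1
    · rw [hN]
      push_cast
      refine Finset.sum_congr rfl ?_
      intro ℓ hℓ
      have hℓc : ℓ.1 < c := (Finset.mem_filter.mp hℓ).2
      have hce : c = (c - 1 - ℓ.1) + (ℓ.1 + 1) := by omega
      rw [hce, pow_add]
      have : (2:ℝ)^(ℓ.1+1) ≠ 0 := by positivity
      field_simp
      ring_nf
      congr 2
      omega
    · refine Finset.sum_congr rfl ?_
      intro ℓ hℓ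
      have hℓc : ¬ ℓ.1 < c := (Finset.mem_filter.mp hℓ).2
      have hce : ℓ.1 + 1 = (ℓ.1 + 1 - c) + c := by omega
      rw [hce, pow_add]
      have : (2:ℝ)^(ℓ.1+1-c) ≠ 0 := by positivity
      have : (2:ℝ)^c ≠ 0 := by positivity
      field_simp
      ring_nf
      congr 2
      omega
  have hR0 : 0 ≤ R := by
    rw [hR]; positivity
  have hR1 : R < 1 := by
    have hb : R ≤ ∑ ℓ ∈ Finset.univ.filter (fun ℓ : Fin m => ¬ ℓ.1 < c),
        (1:ℝ) / 2 ^ (ℓ.1 + 1 - c) := by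
      refine Finset.sum_le_sum ?_
      intro ℓ _
      gcongr
      exact_mod_cast zmod2_val_le _
    have hb2 : ∑ ℓ ∈ Finset.univ.filter (fun ℓ : Fin m => ¬ ℓ.1 < c),
        (1:ℝ) / 2 ^ (ℓ.1 + 1 - c) = ∑ t ∈ Finset.range (m - c), (1:ℝ)/2^(t+1) := by
      rw [Finset.sum_filter,
        Fin.sum_univ_eq_sum_range (fun a => if ¬ a < c then (1:ℝ)/2^(a+1-c) else 0) m,
        ← Finset.sum_filter]
      have hset : (Finset.range m).filter (fun a => ¬ a < c) = Finset.Ico c m := by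
        ext a; simp [Finset.mem_filter, Finset.mem_range, Finset.mem_Ico]; omega
      rw [hset, Finset.sum_Ico_eq_sum_range]
      refine Finset.sum_congr rfl ?_
      intro t _
      have h1 : c + t + 1 - c = t + 1 := by omega
      rw [h1]
    have hgeo := geomsum (m - c)
    have : (0:ℝ) < 1/2^(m-c) := by positivity
    linarith [hb.trans (le_of_eq (hb2.trans hgeo))]
  rw [hsplit, Int.floor_eq_iff]
  constructor
  · push_cast; linarith
  · push_cast; linarith

lemma filter_to_range {m c : ℕ} (hc : c ≤ m) (v : Fin m → ZMod 2) :
    ∑ ℓ ∈ Finset.univ.filter (fun ℓ : Fin m => ℓ.1 < c), (v ℓ).val * 2 ^ (c - 1 - ℓ.1)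
    = ∑ t ∈ Finset.range c,
        (fun t => if h : c - 1 - t < m then (v ⟨c - 1 - t, h⟩).val else 0) t * 2 ^ t := by
  rw [Finset.sum_filter]
  have hconv : (∑ a : Fin m, if a.1 < c then (v a).val * 2 ^ (c - 1 - a.1) else 0)
      = ∑ a : Fin m, (fun a : ℕ =>
          if a < c then (if h : a < m then (v ⟨a, h⟩).val else 0) * 2 ^ (c - 1 - a) else 0) a.1 := by
    refine Finset.sum_congr rfl ?_
    intro a _
    simp only [dif_pos a.2, Fin.eta]
  rw [hconv,
    Fin.sum_univ_eq_sum_range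
      (fun a => if a < c then (if h : a < m then (v ⟨a, h⟩).val else 0) * 2 ^ (c - 1 - a) else 0) m,
    ← Finset.sum_filter]
  have hset : (Finset.range m).filter (fun a => a < c) = Finset.range c := by
    ext a; simp [Finset.mem_filter, Finset.mem_range]; omega
  rw [hset, ← Finset.sum_range_reflect]
  refine Finset.sum_congr rfl ?_
  intro t ht
  have ht' : t < c := Finset.mem_range.mp ht
  have h1 : c - 1 - t < m := by omega
  simp only [dif_pos h1]
  congr 2
  omega

lemma floor_eq_floor_iff {m : ℕ} (c : ℕ) (hc : c ≤ m) (v w : Fin m → ZMod 2) :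
    ⌊(2:ℝ)^c * fval m v⌋ = ⌊(2:ℝ)^c * fval m w⌋ ↔
      ∀ ℓ : Fin m, ℓ.1 < c → v ℓ = w ℓ := by
  rw [floor_fval c hc, floor_fval c hc, Int.natCast_inj]
  constructor
  · intro h ℓ hℓ
    rw [filter_to_range hc v, filter_to_range hc w] at h
    have := binsum_inj c _ _
      (fun t => by split <;> simp [zmod2_val_le])
      (fun t => by split <;> simp [zmod2_val_le]) h (c - 1 - ℓ.1) (by omega)
    have h1 : c - 1 - (c - 1 - ℓ.1) < m := by omega
    rw [dif_pos h1, dif_pos h1] at this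
    have h2 : (⟨c - 1 - (c - 1 - ℓ.1), h1⟩ : Fin m) = ℓ := by
      ext; simp; omega
    rw [h2] at this
    exact ZMod.val_injective 2 this
  · intro h
    refine Finset.sum_congr rfl ?_
    intro ℓ hℓ
    rw [h ℓ (Finset.mem_filter.mp hℓ).2]

lemma zmod2_eq_iff (a b : ZMod 2) : a = b ↔ (0 : ZMod 2) = a + b := by revert a b; decide

lemma Nf_fval {m : ℕ} (c : ℕ) (hc : c + 1 ≤ m) (v w : Fin m → ZMod 2) :
    Nf (fval m v) (fval m w) c = Nf (fval m 0) (fval m (v + w)) c := by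
  have h1 : (⌊(2:ℝ)^(c+1) * fval m v⌋ = ⌊(2:ℝ)^(c+1) * fval m w⌋) ↔
      (⌊(2:ℝ)^(c+1) * fval m 0⌋ = ⌊(2:ℝ)^(c+1) * fval m (v + w)⌋) := by
    rw [floor_eq_floor_iff (c+1) hc, floor_eq_floor_iff (c+1) hc]
    constructor
    · intro h ℓ hℓ
      simp only [Pi.zero_apply, Pi.add_apply]
      rw [← (zmod2_eq_iff _ _).mp (h ℓ hℓ)]
    · intro h ℓ hℓ
      have := h ℓ hℓ
      simp only [Pi.zero_apply, Pi.add_apply] at this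
      exact (zmod2_eq_iff _ _).mpr this
  have h2 : (⌊(2:ℝ)^c * fval m v⌋ = ⌊(2:ℝ)^c * fval m w⌋) ↔
      (⌊(2:ℝ)^c * fval m 0⌋ = ⌊(2:ℝ)^c * fval m (v + w)⌋) := by
    rw [floor_eq_floor_iff c (by omega), floor_eq_floor_iff c (by omega)]
    constructor
    · intro h ℓ hℓ
      simp only [Pi.zero_apply, Pi.add_apply]
      rw [← (zmod2_eq_iff _ _).mp (h ℓ hℓ)]
    · intro h ℓ hℓ
      have := h ℓ hℓ
      simp only [Pi.zero_apply, Pi.add_apply] at this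
      exact (zmod2_eq_iff _ _).mpr this
  unfold Nf
  simp only [h1, h2]

lemma Nf_pt {m s : ℕ} (C : Fin s → Matrix (Fin m) (Fin m) (ZMod 2)) (j : Fin s)
    (c : ℕ) (hc : c + 1 ≤ m) (i i' : ℕ) :
    Nf (pt C i j) (pt C i' j) c = Nf (pt C 0 j) (pt C (i ^^^ i') j) c := by
  rw [pt_eq_fval, pt_eq_fval, pt_eq_fval, pt_eq_fval, Nf_fval c hc,
    bvec_zero, bvec_xor, Matrix.mulVec_zero, Matrix.mulVec_add]

/- ==================== end auxiliary lemmas ==================== -/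

theorem statement (m s : ℕ) (hm : 1 ≤ m) (hs : 1 ≤ s)
    (C : Fin s → Matrix (Fin m) (Fin m) (ZMod 2))
    (u : Finset (Fin s)) (hu : u.Nonempty)
    (k : Fin s → ℕ) (hk : ∀ j ∈ u, k j ≤ m - 1) :
    Gam C u k =
      ∑ i ∈ Finset.range (2 ^ m),
        (if (stack C u k).mulVec (bvec m i) = 0 then (1 : ℚ) else 0) *
          ∏ j ∈ u, (Nf (pt C 0 j) (pt C i j) (k j) : ℚ) := by
  classical
  have hkm : ∀ j ∈ u, k j + 1 ≤ m := fun j hj => by have := hk j hj; omega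
  -- Step A : the indicator can be dropped
  have stepA : ∀ i : ℕ,
      ((if (stack C u k).mulVec (bvec m i) = 0 then (1 : ℚ) else 0) *
        ∏ j ∈ u, (Nf (pt C 0 j) (pt C i j) (k j) : ℚ))
      = ∏ j ∈ u, (Nf (pt C 0 j) (pt C i j) (k j) : ℚ) := by
    intro i
    by_cases h : (stack C u k).mulVec (bvec m i) = 0
    · rw [if_pos h, one_mul]
    · rw [if_neg h, zero_mul]
      symm
      obtain ⟨p, hp⟩ : ∃ p, (stack C u k).mulVec (bvec m i) p ≠ 0 := by
        by_contra hcon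
        push_neg at hcon
        exact h (funext hcon)
      obtain ⟨⟨j, hj⟩, r⟩ := p
      refine Finset.prod_eq_zero hj ?_
      have hrk : r.1 < k j := r.2
      have hrm : r.1 < m := by have := hk j hj; omega
      -- the entry of the stacked product is an entry of (C j).mulVec
      have hentry : (stack C u k).mulVec (bvec m i) ⟨⟨j, hj⟩, r⟩
          = (C j).mulVec (bvec m i) ⟨r.1, hrm⟩ := by
        simp only [Matrix.mulVec, dotProduct, stack, rowAt, dif_pos hrm]
      rw [hentry] at hp
      have key : ∀ c : ℕ, r.1 < c → c ≤ m →
          ⌊(2:ℝ)^c * pt C 0 j⌋ ≠ ⌊(2:ℝ)^c * pt C i j⌋ := by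
        intro c hrc hcm hfe
        rw [pt_eq_fval, pt_eq_fval, bvec_zero, Matrix.mulVec_zero,
          floor_eq_floor_iff c hcm] at hfe
        exact hp ((hfe ⟨r.1, hrm⟩ hrc).symm)
      unfold Nf
      rw [if_neg (key (k j + 1) (by omega) (hkm j hj)),
        if_neg (key (k j) hrk (by have := hk j hj; omega)), Int.cast_zero]
  -- Step B : reindex the inner sum by XOR
  have stepB : ∀ i ∈ Finset.range (2 ^ m),
      (∑ i' ∈ Finset.range (2 ^ m), ∏ j ∈ u, (Nf (pt C i j) (pt C i' j) (k j) : ℚ))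
      = ∑ i' ∈ Finset.range (2 ^ m), ∏ j ∈ u, (Nf (pt C 0 j) (pt C i' j) (k j) : ℚ) := by
    intro i hi
    have him : i < 2 ^ m := Finset.mem_range.mp hi
    refine Finset.sum_nbij' (fun i' => i ^^^ i') (fun i'' => i ^^^ i'') ?_ ?_ ?_ ?_ ?_
    · intro a ha
      exact Finset.mem_range.mpr (Nat.xor_lt_two_pow him (Finset.mem_range.mp ha))
    · intro a ha
      exact Finset.mem_range.mpr (Nat.xor_lt_two_pow him (Finset.mem_range.mp ha))
    · intro a _; exact Nat.xor_xor_cancel_left i a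
    · intro a _; exact Nat.xor_xor_cancel_left i a
    · intro a _
      refine Finset.prod_congr rfl ?_
      intro j hj
      rw [Nf_pt C j (k j) (hkm j hj) i a]
  rw [Gam, Finset.sum_congr rfl stepB, Finset.sum_const, Finset.card_range]
  rw [nsmul_eq_mul, ← mul_assoc]
  have h2m : ((2:ℚ)^m) ≠ 0 := by positivity
  rw [show ((2 ^ m : ℕ) : ℚ) = (2:ℚ)^m by push_cast; ring, inv_mul_cancel₀ h2m, one_mul]
  exact (Finset.sum_congr rfl fun i _ => stepA i).symm

end
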